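/- Let Π' be a finite set of linear constraints over ℝ^D, let j be an index, and let Π'⁻ (resp. Π'⁺) be the set of constraints of Π' in which x_j appears negatively (resp. positively). Suppose a point x ∈ ℝ^D satisfies red_j(φ¹, φ²) for every φ¹ ∈ Π'⁻ and φ² ∈ Π'⁺. Set ub = min{ε^φ_j(x) : φ ∈ Π'⁻} (equal to +∞ if Π'⁻ is empty) and lb = max{ε^φ_j(x) : φ ∈ Π'⁺} (equal to −∞ if Π'⁺ is empty). Then lb ≤ ub; moreover, if lb = ub (both finite), then every φ¹ ∈ Π'⁻ with ε^{φ¹}_j(x) = ub and every φ² ∈ Π'⁺ with ε^{φ²}_j(x) = lb is a non-strict inequality. -/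

import Mathlib

open scoped BigOperators

/-- A linear constraint `∑ k, w k * x k + b ⊵ 0` over `ℝ^D`; `⊵` is `>` when
`strict = true` and `≥` when `strict = false`. -/
structure LinConstr (D : ℕ) where
  w : Fin D → ℝ
  b : ℝ
  strict : Bool

namespace LinConstr

variable {D : ℕ}

/-- `x` satisfies the linear constraint `φ`. -/
def Sat (φ : LinConstr D) (x : Fin D → ℝ) : Prop :=
  if φ.strict then 0 < (∑ k, φ.w k * x k) + φ.b
  else 0 ≤ (∑ k, φ.w k * x k) + φ.b

/-- `x` satisfies every constraint in the set `Γ`. -/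
def SatSet (Γ : Set (LinConstr D)) (x : Fin D → ℝ) : Prop :=
  ∀ φ ∈ Γ, φ.Sat x

/-- The reduction `red_j(φ1, φ2)` of `φ1` (where `x_j` appears negatively) and
`φ2` (where `x_j` appears positively) over the variable `x_j`. -/
def red (j : Fin D) (φ1 φ2 : LinConstr D) : LinConstr D where
  w := fun k => if k = j then 0 else φ1.w k * |φ2.w j| + φ2.w k * |φ1.w j|
  b := φ1.b * |φ2.w j| + φ2.b * |φ1.w j|
  strict := φ1.strict || φ2.strict

/-- `ε^φ_j(x) = −∑_{k≠j} (w_k/w_j)·x_k − b/w_j`. -/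
noncomputable def eps (φ : LinConstr D) (j : Fin D) (x : Fin D → ℝ) : ℝ :=
  -(∑ k ∈ Finset.univ.erase j, (φ.w k / φ.w j) * x k) - φ.b / φ.w j

/-- The constraints of `S` in which `x_j` appears negatively. -/
def negSet (j : Fin D) (S : Set (LinConstr D)) : Set (LinConstr D) :=
  {φ ∈ S | φ.w j < 0}

/-- The constraints of `S` in which `x_j` appears positively. -/
def posSet (j : Fin D) (S : Set (LinConstr D)) : Set (LinConstr D) :=
  {φ ∈ S | 0 < φ.w j}

/-- Elimination of the variable `x_j` from the set `S` (Fourier–Motzkin step). -/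
def elim (j : Fin D) (S : Set (LinConstr D)) : Set (LinConstr D) :=
  (S \ (negSet j S ∪ posSet j S)) ∪
    {ψ | ∃ φ1 ∈ negSet j S, ∃ φ2 ∈ posSet j S, ψ = red j φ1 φ2}

/-- `PiAt Γ i` is the paper's `Π_{i+1}` (0-based indexing of the coordinates):
`PiAt Γ (D−1) = Γ` and `PiAt Γ i = elim_{x_{i+1}} (PiAt Γ (i+1))`. -/
def PiAt (Γ : Set (LinConstr D)) (i : ℕ) : Set (LinConstr D) :=
  if h : i + 1 < D then elim ⟨i + 1, h⟩ (PiAt Γ (i + 1)) else Γ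
termination_by D - i
decreasing_by omega

/-- The least upper bound `ub_i = min {ε^φ_i(x) : φ ∈ S⁻_i}` (`+∞` if empty). -/
noncomputable def ubE (S : Set (LinConstr D)) (i : Fin D) (x : Fin D → ℝ) : EReal :=
  sInf ((fun φ => ((eps φ i x : ℝ) : EReal)) '' negSet i S)

/-- The greatest lower bound `lb_i = max {ε^φ_i(x) : φ ∈ S⁺_i}` (`−∞` if empty). -/
noncomputable def lbE (S : Set (LinConstr D)) (i : Fin D) (x : Fin D → ℝ) : EReal :=
  sSup ((fun φ => ((eps φ i x : ℝ) : EReal)) '' posSet i S)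

/-- Some strict constraint of `S` attains the value `v` at `x` (via `ε^φ_i`). -/
def StrictHit (S : Set (LinConstr D)) (i : Fin D) (x : Fin D → ℝ) (v : EReal) : Prop :=
  ∃ φ ∈ S, φ.strict = true ∧ ((eps φ i x : ℝ) : EReal) = v

/-- The `max^i`-style adjustment: `r = v` unless a strict constraint attains `v`
(`hit`), in which case `r = v + e` for the chosen `e > 0` with `L + e ≤ U`. -/
def AdjUp (hit : Prop) (v L U : EReal) (e : ℝ) (r : EReal) : Prop :=
  (¬ hit ∧ e = 0 ∧ r = v) ∨
  (hit ∧ 0 < e ∧ L + (e : EReal) ≤ U ∧ r = v + (e : EReal))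

/-- The `min^i`-style adjustment: `r = v` unless a strict constraint attains `v`
(`hit`), in which case `r = v − e` for the chosen `e > 0` with `L ≤ U − e`. -/
def AdjDown (hit : Prop) (v L U : EReal) (e : ℝ) (r : EReal) : Prop :=
  (¬ hit ∧ e = 0 ∧ r = v) ∨
  (hit ∧ 0 < e ∧ L ≤ U - (e : EReal) ∧ r = v - (e : EReal))

/-- The `i`-th step of the constraint-layer computation, with the `ε` values
`e1` (for `max^i`) and `e2` (for `min^i`) made explicit:
`z_i = min^i(max^i(x̃_i, lb_i), ub_i)`, where the bounds are computed from
`Π_i = PiAt Γ i` at the (previously computed) coordinates of `z`. -/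
def IsCLStepE (Γ : Set (LinConstr D)) (xt z : Fin D → ℝ) (e1 e2 : ℝ) (i : Fin D) : Prop :=
  ∃ a : EReal,
    AdjUp (StrictHit (posSet i (PiAt Γ i.1)) i z
        (max ((xt i : ℝ) : EReal) (lbE (PiAt Γ i.1) i z)))
      (max ((xt i : ℝ) : EReal) (lbE (PiAt Γ i.1) i z))
      (lbE (PiAt Γ i.1) i z) (ubE (PiAt Γ i.1) i z) e1 a ∧
    AdjDown (StrictHit (negSet i (PiAt Γ i.1)) i z (min a (ubE (PiAt Γ i.1) i z)))
      (min a (ubE (PiAt Γ i.1) i z))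
      (lbE (PiAt Γ i.1) i z) (ubE (PiAt Γ i.1) i z) e2 ((z i : ℝ) : EReal)

/-- `z` is the output of the constraint layer on input `xt` for the explicit
admissible choice `ε₁, ε₂` of the `ε` values. -/
def IsCLE (Γ : Set (LinConstr D)) (xt z : Fin D → ℝ) (ε₁ ε₂ : Fin D → ℝ) : Prop :=
  ∀ i : Fin D, IsCLStepE Γ xt z (ε₁ i) (ε₂ i) i

/-- `z = CL(xt)` for some admissible choice of the `ε` values. -/
def IsCL (Γ : Set (LinConstr D)) (xt z : Fin D → ℝ) : Prop :=
  ∃ ε₁ ε₂ : Fin D → ℝ, IsCLE Γ xt z ε₁ ε₂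

/-- The `i`-th step holds for some admissible `ε` values. -/
def IsCLStep (Γ : Set (LinConstr D)) (xt z : Fin D → ℝ) (i : Fin D) : Prop :=
  ∃ e1 e2 : ℝ, IsCLStepE Γ xt z e1 e2 i

/-- `z` is optimal for `xt` with respect to `Γ`. -/
def Optimal (Γ : Set (LinConstr D)) (xt z : Fin D → ℝ) : Prop :=
  SatSet Γ z ∧
    ¬ ∃ x' : Fin D → ℝ, x' ≠ z ∧ SatSet Γ x' ∧ ∀ i, |x' i - xt i| ≤ |z i - xt i|

/-- Replace a (possibly strict) constraint by its non-strict version. -/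
def toGe (φ : LinConstr D) : LinConstr D := { φ with strict := false }

/-- `Π^≥`: every strict constraint replaced by its non-strict version. -/
def PiGe (Γ : Set (LinConstr D)) : Set (LinConstr D) := toGe '' Γ

/-- The deterministic constraint layer in the absence of strict constraints:
`CLns Γ xt i = min(max(xt_i, lb_i), ub_i)`, the bounds being computed from
`PiAt Γ i` at the previously computed coordinates. -/
noncomputable def CLns (Γ : Set (LinConstr D)) (xt : Fin D → ℝ) (i : Fin D) : ℝ :=
  (min (max ((xt i : ℝ) : EReal)
        (lbE (PiAt Γ i.1) i (fun k => if h : (k : ℕ) < (i : ℕ) then CLns Γ xt k else 0)))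
      (ubE (PiAt Γ i.1) i (fun k => if h : (k : ℕ) < (i : ℕ) then CLns Γ xt k else 0))).toReal
termination_by (i : ℕ)
decreasing_by all_goals exact h

end LinConstr

open LinConstr

namespace LinConstr

variable {D : ℕ}

lemma eps_eq (φ : LinConstr D) (j : Fin D) (x : Fin D → ℝ) (hj : φ.w j ≠ 0) :
    eps φ j x = -((∑ k ∈ Finset.univ.erase j, φ.w k * x k) + φ.b) / φ.w j := by
  unfold eps
  rw [show (∑ k ∈ Finset.univ.erase j, (φ.w k / φ.w j) * x k)
      = (∑ k ∈ Finset.univ.erase j, φ.w k * x k) / φ.w j by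
    rw [Finset.sum_div]; exact Finset.sum_congr rfl fun k _ => by ring]
  field_simp
  ring

lemma sum_key (φ : LinConstr D) (j : Fin D) (x : Fin D → ℝ) (hj : φ.w j ≠ 0) :
    (∑ k ∈ Finset.univ.erase j, φ.w k * x k) + φ.b = -(φ.w j) * eps φ j x := by
  rw [eps_eq φ j x hj]
  field_simp

lemma red_val (j : Fin D) (φ1 φ2 : LinConstr D) (x : Fin D → ℝ)
    (h1 : φ1.w j < 0) (h2 : 0 < φ2.w j) :
    (∑ k, (red j φ1 φ2).w k * x k) + (red j φ1 φ2).b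
      = φ1.w j * φ2.w j * (eps φ2 j x - eps φ1 j x) := by
  have hsum : (∑ k, (red j φ1 φ2).w k * x k)
      = ∑ k ∈ Finset.univ.erase j, (red j φ1 φ2).w k * x k := by
    rw [← Finset.sum_erase_add _ _ (Finset.mem_univ j)]
    simp [red]
  rw [hsum]
  have habs1 : |φ1.w j| = -(φ1.w j) := abs_of_neg h1
  have habs2 : |φ2.w j| = φ2.w j := abs_of_pos h2
  have hexp : ∑ k ∈ Finset.univ.erase j, (red j φ1 φ2).w k * x k
      = (∑ k ∈ Finset.univ.erase j, φ1.w k * x k) * |φ2.w j|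
        + (∑ k ∈ Finset.univ.erase j, φ2.w k * x k) * |φ1.w j| := by
    rw [Finset.sum_mul, Finset.sum_mul, ← Finset.sum_add_distrib]
    refine Finset.sum_congr rfl fun k hk => ?_
    have hkj : k ≠ j := Finset.ne_of_mem_erase hk
    simp [red, hkj]
    ring
  rw [hexp]
  have e1 := sum_key φ1 j x (ne_of_lt h1)
  have e2 := sum_key φ2 j x (ne_of_gt h2)
  simp only [red, habs1, habs2]
  nlinarith [e1, e2]

lemma key_le (j : Fin D) (φ1 φ2 : LinConstr D) (x : Fin D → ℝ)
    (h1 : φ1.w j < 0) (h2 : 0 < φ2.w j) (hsat : (red j φ1 φ2).Sat x) :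
    eps φ2 j x ≤ eps φ1 j x ∧
      ((φ1.strict = true ∨ φ2.strict = true) → eps φ2 j x < eps φ1 j x) := by
  have hv := red_val j φ1 φ2 x h1 h2
  have hprod : φ1.w j * φ2.w j < 0 := mul_neg_of_neg_of_pos h1 h2
  unfold Sat at hsat
  rw [hv] at hsat
  have hstrict : (φ1.strict = true ∨ φ2.strict = true) → (red j φ1 φ2).strict = true := by
    intro hs
    show (φ1.strict || φ2.strict) = true
    rcases hs with h | h <;> simp [h]
  constructor
  · split_ifs at hsat <;> nlinarith
  · intro hs
    rw [if_pos (hstrict hs)] at hsat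
    nlinarith

end LinConstr


/-- If a point `x` satisfies every reduction `red_j(φ1, φ2)` with
`φ1 ∈ Γ'⁻`, `φ2 ∈ Γ'⁺`, then the bounds `lb = max {ε^φ_j(x) : φ ∈ Γ'⁺}` and
`ub = min {ε^φ_j(x) : φ ∈ Γ'⁻}` satisfy `lb ≤ ub`; moreover if `lb = ub` then every
constraint of `Γ'⁻` (resp. `Γ'⁺`) attaining `ub` (resp. `lb`) is non-strict. -/
theorem bounds_le_of_red_sat {D : ℕ} (Γ' : Set (LinConstr D)) (hfin : Γ'.Finite)
    (j : Fin D) (x : Fin D → ℝ)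
    (hred : ∀ φ1 ∈ negSet j Γ', ∀ φ2 ∈ posSet j Γ', (red j φ1 φ2).Sat x) :
    lbE Γ' j x ≤ ubE Γ' j x ∧
      (lbE Γ' j x = ubE Γ' j x →
        (∀ φ1 ∈ negSet j Γ', ((eps φ1 j x : ℝ) : EReal) = ubE Γ' j x →
          φ1.strict = false) ∧
        (∀ φ2 ∈ posSet j Γ', ((eps φ2 j x : ℝ) : EReal) = lbE Γ' j x →
          φ2.strict = false)) := by
    classical
  have key : ∀ φ1 ∈ negSet j Γ', ∀ φ2 ∈ posSet j Γ',
      eps φ2 j x ≤ eps φ1 j x ∧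
        ((φ1.strict = true ∨ φ2.strict = true) → eps φ2 j x < eps φ1 j x) := by
    intro φ1 h1 φ2 h2
    exact key_le j φ1 φ2 x h1.2 h2.2 (hred φ1 h1 φ2 h2)
  constructor
  · apply sSup_le
    rintro _ ⟨φ2, hφ2, rfl⟩
    show ((eps φ2 j x : ℝ) : EReal) ≤ _
    apply le_sInf
    rintro _ ⟨φ1, hφ1, rfl⟩
    show ((eps φ2 j x : ℝ) : EReal) ≤ ((eps φ1 j x : ℝ) : EReal)
    exact_mod_cast (key φ1 hφ1 φ2 hφ2).1
  · intro heq
    constructor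
    · intro φ1 hφ1 hub
      by_contra hs
      have hs1 : φ1.strict = true := by
        cases h : φ1.strict with
        | false => exact absurd h hs
        | true => rfl
      have hne : ((fun φ => ((eps φ j x : ℝ) : EReal)) '' posSet j Γ').Nonempty := by
        by_contra hemp
        rw [Set.not_nonempty_iff_eq_empty] at hemp
        have hb : lbE Γ' j x = ⊥ := by rw [lbE, hemp, sSup_empty]
        exact (EReal.coe_ne_bot _) (hub.trans (heq.symm.trans hb))
      have hfinimg : ((fun φ => ((eps φ j x : ℝ) : EReal)) '' posSet j Γ').Finite :=
        (hfin.subset (fun φ h => h.1)).image _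
      obtain ⟨φ2, hφ2, hval⟩ := Set.Nonempty.csSup_mem hne hfinimg
      have hval' : ((eps φ2 j x : ℝ) : EReal) = lbE Γ' j x := hval
      have heps : eps φ2 j x = eps φ1 j x := by
        have : ((eps φ2 j x : ℝ) : EReal) = ((eps φ1 j x : ℝ) : EReal) :=
          hval'.trans (heq.trans hub.symm)
        exact_mod_cast this
      have hlt := (key φ1 hφ1 φ2 hφ2).2 (Or.inl hs1)
      rw [heps] at hlt
      exact lt_irrefl _ hlt
    · intro φ2 hφ2 hlb
      by_contra hs
      have hs2 : φ2.strict = true := by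
        cases h : φ2.strict with
        | false => exact absurd h hs
        | true => rfl
      have hne : ((fun φ => ((eps φ j x : ℝ) : EReal)) '' negSet j Γ').Nonempty := by
        by_contra hemp
        rw [Set.not_nonempty_iff_eq_empty] at hemp
        have ht : ubE Γ' j x = ⊤ := by rw [ubE, hemp, sInf_empty]
        exact (EReal.coe_ne_top _) (hlb.trans (heq.trans ht))
      have hfinimg : ((fun φ => ((eps φ j x : ℝ) : EReal)) '' negSet j Γ').Finite :=
        (hfin.subset (fun φ h => h.1)).image _
      obtain ⟨φ1, hφ1, hval⟩ := Set.Nonempty.csInf_mem hne hfinimg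
      have hval' : ((eps φ1 j x : ℝ) : EReal) = ubE Γ' j x := hval
      have heps : eps φ1 j x = eps φ2 j x := by
        have : ((eps φ1 j x : ℝ) : EReal) = ((eps φ2 j x : ℝ) : EReal) :=
          hval'.trans (heq.symm.trans hlb.symm)
        exact_mod_cast this
      have hlt := (key φ1 hφ1 φ2 hφ2).2 (Or.inr hs2)
      rw [heps] at hlt
      exact lt_irrefl _ hlt
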